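/- Let μ ∈ ℝ, let A : ℝ → ℝ be smooth, and let 𝔄 : ℝ → ℝ be smooth with 𝔄′ = A. Then for every smooth solution u : ℝ × (0,∞) → ℝ of the equation x^{μ−1}u_t = (A(u)u_x)_x + x^{μ}u_x (the case B = 1, f = x^{μ−1}, h = x^{μ}), both pairs F₁ = x^{μ−1}e^{μt}u, G₁ = −e^{μt}(A(u)u_x + x^{μ}u) and F₂ = x^{μ}e^{(μ+1)t}u, G₂ = e^{(μ+1)t}(−x·A(u)u_x − x^{μ+1}u + 𝔄(u)) satisfy the conservation-law identity ∂_t F + ∂_x G = 0 at every point of ℝ × (0,∞). -/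

import Mathlib

open Set Real
open scoped ContDiff

/-- For the equation `x^{μ-1} u_t = (A(u) u_x)_x + x^μ u_x` on `(0,∞)`
(the case `B = 1`, `f = x^{μ-1}`, `h = x^μ`), both pairs
`F₁ = x^{μ-1} e^{μt} u`, `G₁ = -e^{μt}(A(u) u_x + x^μ u)` and
`F₂ = x^μ e^{(μ+1)t} u`, `G₂ = e^{(μ+1)t}(-x A(u) u_x - x^{μ+1} u + 𝔄(u))`
(where `𝔄' = A`) are conserved vectors. -/
theorem conservation_laws_case_B_one_f_pow_h_pow
    (μ : ℝ) (A FA : ℝ → ℝ) (hA : ContDiff ℝ ∞ A)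
    (hFA : ContDiff ℝ ∞ FA) (hFA' : ∀ v : ℝ, HasDerivAt FA (A v) v)
    (u : ℝ → ℝ → ℝ)
    (hu : ContDiffOn ℝ ∞ (fun p : ℝ × ℝ => u p.1 p.2) (univ ×ˢ Ioi 0))
    (hpde : ∀ t : ℝ, ∀ x ∈ Ioi (0:ℝ),
      x ^ (μ - 1) * deriv (fun s => u s x) t
        = deriv (fun y => A (u t y) * deriv (fun z => u t z) y) x
          + x ^ μ * deriv (fun y => u t y) x) :
    ∀ t : ℝ, ∀ x ∈ Ioi (0:ℝ),
      (deriv (fun s => x ^ (μ - 1) * Real.exp (μ * s) * u s x) t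
        + deriv (fun y =>
            -(Real.exp (μ * t) * (A (u t y) * deriv (fun z => u t z) y
                + y ^ μ * u t y))) x = 0)
      ∧ (deriv (fun s => x ^ μ * Real.exp ((μ + 1) * s) * u s x) t
        + deriv (fun y =>
            Real.exp ((μ + 1) * t)
              * (-(y * A (u t y) * deriv (fun z => u t z) y)
                 - y ^ (μ + 1) * u t y + FA (u t y))) x = 0) := by
  intro t x hx
  have hxne : x ≠ 0 := ne_of_gt hx
  have hO : IsOpen ((univ : Set ℝ) ×ˢ Ioi (0:ℝ)) := isOpen_univ.prod isOpen_Ioi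
  have hmem : ((t, x) : ℝ × ℝ) ∈ (univ : Set ℝ) ×ˢ Ioi (0:ℝ) := ⟨mem_univ _, hx⟩
  have hcAt : ContDiffAt ℝ ∞ (fun p : ℝ × ℝ => u p.1 p.2) (t, x) :=
    hu.contDiffAt (hO.mem_nhds hmem)
  -- derivative in t
  have hst : ContDiffAt ℝ ∞ (fun s => u s x) t :=
    hcAt.comp t (contDiffAt_id.prodMk contDiffAt_const)
  have hU_t : HasDerivAt (fun s => u s x) (deriv (fun s => u s x) t) t :=
    (hst.differentiableAt (by norm_num)).hasDerivAt
  -- slice in x is smooth on Ioi 0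
  have hslice : ContDiffOn ℝ ∞ (fun y => u t y) (Ioi 0) := by
    have : ContDiffOn ℝ ∞ ((fun p : ℝ × ℝ => u p.1 p.2) ∘ (fun y => ((t:ℝ), y))) (Ioi 0) :=
      hu.comp ((contDiff_const.prodMk contDiff_id).contDiffOn) (fun y hy => ⟨mem_univ _, hy⟩)
    exact this
  have hU_x : HasDerivAt (fun y => u t y) (deriv (fun y => u t y) x) x :=
    (((hslice.differentiableOn (by norm_num)).differentiableAt
      (isOpen_Ioi.mem_nhds hx))).hasDerivAt
  set U := u t x with hU
  set Ut := deriv (fun s => u s x) t with hUt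
  set Ux := deriv (fun y => u t y) x with hUx
  -- second derivative in x
  have hux_cd : ContDiffOn ℝ ∞ (deriv (fun y => u t y)) (Ioi 0) :=
    hslice.deriv_of_isOpen isOpen_Ioi (by norm_num)
  set Uxx := deriv (deriv (fun y => u t y)) x with hUxx
  have hU_xx : HasDerivAt (fun y => deriv (fun z => u t z) y) Uxx x :=
    ((hux_cd.differentiableOn (by norm_num)).differentiableAt
      (isOpen_Ioi.mem_nhds hx)).hasDerivAt
  -- A ∘ u
  have hAat : HasDerivAt A (deriv A U) U :=
    ((hA.differentiable (by norm_num)) U).hasDerivAt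
  set a := deriv A U with ha
  have hAu : HasDerivAt (fun y => A (u t y)) (a * Ux) x := by
    have := HasDerivAt.comp x hAat hU_x
    exact this
  -- product A(u) * u_x
  have hg : HasDerivAt (fun y => A (u t y) * deriv (fun z => u t z) y)
      ((a * Ux) * Ux + A U * Uxx) x := hAu.mul hU_xx
  -- the PDE at this point
  have hp : x ^ (μ - 1) * Ut = ((a * Ux) * Ux + A U * Uxx) + x ^ μ * Ux := by
    have := hpde t x hx
    rw [hg.deriv] at this
    exact this
  -- rpow facts
  have hx1 : x ^ μ = x ^ (μ - 1) * x := by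
    rw [← Real.rpow_add_one hxne (μ - 1), sub_add_cancel]
  have hx2 : x ^ (μ + 1) = x ^ μ * x := Real.rpow_add_one hxne μ
  have hpow1 : HasDerivAt (fun y : ℝ => y ^ μ) (μ * x ^ (μ - 1)) x :=
    Real.hasDerivAt_rpow_const (Or.inl hxne)
  have hpow2 : HasDerivAt (fun y : ℝ => y ^ (μ + 1)) ((μ + 1) * x ^ μ) x := by
    have := Real.hasDerivAt_rpow_const (p := μ + 1) (x := x) (Or.inl hxne)
    rw [add_sub_cancel_right] at this
    exact this
  have hexp1 : HasDerivAt (fun s => Real.exp (μ * s)) (Real.exp (μ * t) * (μ * 1)) t :=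
    ((hasDerivAt_id t).const_mul μ).exp
  have hexp2 : HasDerivAt (fun s => Real.exp ((μ + 1) * s))
      (Real.exp ((μ + 1) * t) * ((μ + 1) * 1)) t :=
    ((hasDerivAt_id t).const_mul (μ + 1)).exp
  constructor
  · -- first conservation law
    have hF1 : HasDerivAt (fun s => x ^ (μ - 1) * Real.exp (μ * s) * u s x)
        ((x ^ (μ - 1) * (Real.exp (μ * t) * (μ * 1))) * U
          + (x ^ (μ - 1) * Real.exp (μ * t)) * Ut) t :=
      (hexp1.const_mul (x ^ (μ - 1))).mul hU_t
    have hG1 : HasDerivAt (fun y =>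
        -(Real.exp (μ * t) * (A (u t y) * deriv (fun z => u t z) y + y ^ μ * u t y)))
        (-(Real.exp (μ * t) * (((a * Ux) * Ux + A U * Uxx)
          + ((μ * x ^ (μ - 1)) * U + x ^ μ * Ux)))) x :=
      ((hg.add (hpow1.mul hU_x)).const_mul (Real.exp (μ * t))).neg
    rw [hF1.deriv, hG1.deriv]
    linear_combination Real.exp (μ * t) * hp
  · -- second conservation law
    have hF2 : HasDerivAt (fun s => x ^ μ * Real.exp ((μ + 1) * s) * u s x)
        ((x ^ μ * (Real.exp ((μ + 1) * t) * ((μ + 1) * 1))) * U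
          + (x ^ μ * Real.exp ((μ + 1) * t)) * Ut) t :=
      (hexp2.const_mul (x ^ μ)).mul hU_t
    have hFAu : HasDerivAt (fun y => FA (u t y)) (A U * Ux) x := by
      have := HasDerivAt.comp x (hFA' U) hU_x
      exact this
    have hyA : HasDerivAt (fun y => y * A (u t y)) (1 * A U + x * (a * Ux)) x :=
      (hasDerivAt_id' x).mul hAu
    have hG2 : HasDerivAt (fun y =>
        Real.exp ((μ + 1) * t)
          * (-(y * A (u t y) * deriv (fun z => u t z) y)
             - y ^ (μ + 1) * u t y + FA (u t y)))
        (Real.exp ((μ + 1) * t)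
          * ((-((1 * A U + x * (a * Ux)) * Ux + (x * A U) * Uxx)
             - (((μ + 1) * x ^ μ) * U + x ^ (μ + 1) * Ux)) + A U * Ux)) x :=
      ((((hyA.mul hU_xx).neg.sub (hpow2.mul hU_x)).add hFAu).const_mul
        (Real.exp ((μ + 1) * t)))
    rw [hF2.deriv, hG2.deriv]
    linear_combination Real.exp ((μ + 1) * t) * x * hp
      + Real.exp ((μ + 1) * t) * Ut * hx1 - Real.exp ((μ + 1) * t) * Ux * hx2
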